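/- For p ∈ (1,2] and all x, y > 0 with x ≠ y, ∂_x θ_p(x,y) + ∂_y θ_p(x,y) ≥ 0, where θ_p(x,y) = (p−1)(x−y)/(x^{p−1} − y^{p−1}). -/

import Mathlib

/-- The mean `θ_p`, the reciprocal of the divided difference of `f_p x = x^(p-1)/(p-1)`. -/
noncomputable def thetaP (p x y : ℝ) : ℝ :=
  if x = y then x ^ (2 - p) else (p - 1) * (x - y) / (x ^ (p - 1) - y ^ (p - 1))

theorem stmt16 (p x y : ℝ) (hp1 : 1 < p) (hp2 : p ≤ 2) (hx : 0 < x) (hy : 0 < y)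
    (hxy : x ≠ y) :
    0 ≤ deriv (fun x' => thetaP p x' y) x + deriv (fun y' => thetaP p x y') y := by
  set q := p - 1 with hq
  have hq0 : 0 < q := by simp [hq]; linarith
  have hq1 : q ≤ 1 := by simp [hq]; linarith
  have hden : x ^ q - y ^ q ≠ 0 := by
    intro h
    rcases lt_trichotomy x y with h' | h' | h'
    · have := Real.rpow_lt_rpow hx.le h' hq0; linarith
    · exact hxy h'
    · have := Real.rpow_lt_rpow hy.le h' hq0; linarith
  have hA : HasDerivAt (fun x' => q * (x' - y) / (x' ^ q - y ^ q))
      ((q * (x ^ q - y ^ q) - q * (x - y) * (q * x ^ (q - 1))) / (x ^ q - y ^ q) ^ 2) x := by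
    have h1 : HasDerivAt (fun x' : ℝ => q * (x' - y)) q x := by
      simpa using ((hasDerivAt_id x).sub_const y).const_mul q
    have h2 : HasDerivAt (fun x' : ℝ => x' ^ q - y ^ q) (q * x ^ (q - 1)) x :=
      (Real.hasDerivAt_rpow_const (Or.inl hx.ne')).sub_const _
    exact h1.div h2 hden
  have hB : HasDerivAt (fun y' => q * (x - y') / (x ^ q - y' ^ q))
      (((-q) * (x ^ q - y ^ q) - q * (x - y) * (-(q * y ^ (q - 1)))) / (x ^ q - y ^ q) ^ 2) y := by
    have h1 : HasDerivAt (fun y' : ℝ => q * (x - y')) (-q) y := by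
      simpa using ((hasDerivAt_id y).const_sub x).const_mul q
    have h2 : HasDerivAt (fun y' : ℝ => x ^ q - y' ^ q) (-(q * y ^ (q - 1))) y :=
      (Real.hasDerivAt_rpow_const (Or.inl hy.ne')).const_sub _
    exact h1.div h2 hden
  have e1 : deriv (fun x' => thetaP p x' y) x
      = (q * (x ^ q - y ^ q) - q * (x - y) * (q * x ^ (q - 1))) / (x ^ q - y ^ q) ^ 2 := by
    rw [← hA.deriv]
    apply Filter.EventuallyEq.deriv_eq
    filter_upwards [eventually_ne_nhds hxy] with z hz
    simp [thetaP, hz, hq]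
  have e2 : deriv (fun y' => thetaP p x y') y
      = ((-q) * (x ^ q - y ^ q) - q * (x - y) * (-(q * y ^ (q - 1)))) / (x ^ q - y ^ q) ^ 2 := by
    rw [← hB.deriv]
    apply Filter.EventuallyEq.deriv_eq
    filter_upwards [eventually_ne_nhds (Ne.symm hxy)] with z hz
    simp [thetaP, hz.symm, hq]
  rw [e1, e2, ← add_div]
  apply div_nonneg _ (sq_nonneg _)
  have key : 0 ≤ (x - y) * (y ^ (q - 1) - x ^ (q - 1)) := by
    rcases lt_or_gt_of_ne hxy with h | h
    · have := Real.rpow_le_rpow_of_nonpos hx h.le (by linarith : q - 1 ≤ 0)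
      nlinarith
    · have := Real.rpow_le_rpow_of_nonpos hy h.le (by linarith : q - 1 ≤ 0)
      nlinarith
  nlinarith [sq_nonneg q]
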